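/- arXiv:2505.22213 — 2 statements merged into one kernel-verified Lean document; each statement's English description precedes it below -/
import Mathlib

section
/- Let S₀, S₁, … be a saturation with respect to the PaRC calculus. If a ground clause C is redundant with respect to S_i*, then for every j ≥ i, C is redundant with respect to S_j* and also redundant with respect to ⌊S_j⌋. -/
set_option autoImplicit false

namespace PaRC

/-- First-order terms over a signature `F` with arity function `ar`;
variables are natural numbers. -/
inductive Trm (F : Type) (ar : F → ℕ) : Type
  | var : ℕ → Trm F ar
  | app : (f : F) → (Fin (ar f) → Trm F ar) → Trm F ar

variable {F : Type} {ar : F → ℕ}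

/-- Substitutions. -/
abbrev Subst (F : Type) (ar : F → ℕ) : Type := ℕ → Trm F ar

/-- Applying a substitution to a term. -/
def Trm.subst (σ : Subst F ar) : Trm F ar → Trm F ar
  | .var x => σ x
  | .app f a => .app f (fun i => (a i).subst σ)

/-- Composition of substitutions. -/
def Subst.comp (σ τ : Subst F ar) : Subst F ar := fun x => Trm.subst τ (σ x)

/-- A term is ground if it contains no variables. -/
def Trm.IsGround : Trm F ar → Prop
  | .var _ => False
  | .app _ a => ∀ i, (a i).IsGround

/-- Free variables of a term. -/
def Trm.fvars : Trm F ar → Set ℕ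
  | .var x => {x}
  | .app _ a => ⋃ i, (a i).fvars

/-- Subterm at a position (list of argument indices). -/
def Trm.atPos : Trm F ar → List ℕ → Option (Trm F ar)
  | t, [] => some t
  | .var _, _ :: _ => none
  | .app f a, i :: p => if h : i < ar f then Trm.atPos (a ⟨i, h⟩) p else none

/-- Replace the subterm at a given position. -/
def Trm.replace : Trm F ar → List ℕ → Trm F ar → Trm F ar
  | _, [], u => u
  | .var x, _ :: _, _ => .var x
  | .app f a, i :: p, u =>
      if h : i < ar f then
        .app f (Function.update a ⟨i, h⟩ (Trm.replace (a ⟨i, h⟩) p u))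
      else .app f a

/-- An equality literal: polarity together with the two sides. -/
structure Lit (F : Type) (ar : F → ℕ) : Type where
  pos : Bool
  lhs : Trm F ar
  rhs : Trm F ar

def Lit.subst (σ : Subst F ar) (L : Lit F ar) : Lit F ar :=
  ⟨L.pos, Trm.subst σ L.lhs, Trm.subst σ L.rhs⟩

def Lit.IsGround (L : Lit F ar) : Prop := L.lhs.IsGround ∧ L.rhs.IsGround

def Lit.fvars (L : Lit F ar) : Set ℕ := L.lhs.fvars ∪ L.rhs.fvars

/-- A clause is a (finite) multiset of literals. -/
abbrev Clause (F : Type) (ar : F → ℕ) : Type := Multiset (Lit F ar)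

def Clause.subst (σ : Subst F ar) (C : Clause F ar) : Clause F ar := C.map (Lit.subst σ)

def Clause.IsGround (C : Clause F ar) : Prop := ∀ L ∈ C, L.IsGround

def Clause.fvars (C : Clause F ar) : Set ℕ := {x | ∃ L ∈ C, x ∈ L.fvars}

/-- A substitution is grounding for a clause if the instance is ground. -/
def GroundingFor (θ : Subst F ar) (C : Clause F ar) : Prop :=
  Clause.IsGround (Clause.subst θ C)

/-- A term occurs in a clause if it is a subterm of a side of one of its literals. -/
def OccursIn (u : Trm F ar) (C : Clause F ar) : Prop :=
  ∃ L ∈ C, ∃ p, Trm.atPos L.lhs p = some u ∨ Trm.atPos L.rhs p = some u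

/-! ### Semantics: Σ-algebras, entailment and satisfiability -/

/-- A Σ-algebra (first-order structure for the purely equational signature). -/
structure Alg (F : Type) (ar : F → ℕ) : Type 1 where
  carrier : Type
  nonempty : Nonempty carrier
  interp : (f : F) → (Fin (ar f) → carrier) → carrier

def Trm.eval (A : Alg F ar) (v : ℕ → A.carrier) : Trm F ar → A.carrier
  | .var x => v x
  | .app f a => A.interp f (fun i => (a i).eval A v)

def Lit.holds (A : Alg F ar) (v : ℕ → A.carrier) (L : Lit F ar) : Prop :=
  if L.pos then L.lhs.eval A v = L.rhs.eval A v else L.lhs.eval A v ≠ L.rhs.eval A v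

/-- A clause is true in an algebra if it is true under every valuation
(variables are implicitly universally quantified). -/
def Clause.validIn (A : Alg F ar) (C : Clause F ar) : Prop :=
  ∀ v : ℕ → A.carrier, ∃ L ∈ C, Lit.holds A v L

/-- First-order entailment between a set of clauses and a clause. -/
def Entails (S : Set (Clause F ar)) (D : Clause F ar) : Prop :=
  ∀ A : Alg F ar, (∀ C ∈ S, Clause.validIn A C) → Clause.validIn A D

/-- Satisfiability of a set of clauses. -/
def Satisfiable (S : Set (Clause F ar)) : Prop :=
  ∃ A : Alg F ar, ∀ C ∈ S, Clause.validIn A C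

/-! ### Simplification orders and their bag extensions -/

/-- A simplification order: a reduction ordering that is total on ground terms
and has the subterm property. -/
structure SimpOrd (F : Type) (ar : F → ℕ) : Type where
  gt : Trm F ar → Trm F ar → Prop
  trans : ∀ {s t u : Trm F ar}, gt s t → gt t u → gt s u
  irrefl : ∀ s : Trm F ar, ¬ gt s s
  wf : WellFounded (fun s t : Trm F ar => gt t s)
  substStable : ∀ (σ : Subst F ar) {s t : Trm F ar}, gt s t →
    gt (Trm.subst σ s) (Trm.subst σ t)
  ctxStable : ∀ (s : Trm F ar) (p : List ℕ) {l r : Trm F ar}, (Trm.atPos s p).isSome →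
    gt l r → gt (Trm.replace s p l) (Trm.replace s p r)
  subterm : ∀ {s t : Trm F ar} (p : List ℕ), Trm.atPos s p = some t → s ≠ t → gt s t
  totalGround : ∀ {s t : Trm F ar}, s.IsGround → t.IsGround → s ≠ t → gt s t ∨ gt t s

/-- Bag (Dershowitz–Manna multiset) extension of an ordering: `N > M`. -/
def MultGT {α : Type} (r : α → α → Prop) (N M : Multiset α) : Prop :=
  ∃ X Y Z : Multiset α, X ≠ 0 ∧ N = Z + X ∧ M = Z + Y ∧ ∀ y ∈ Y, ∃ x ∈ X, r x y

/-- The multiset of terms associated to a literal: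
`{s, t}` for `s ≈ t` and `{s, s, t, t}` for `s ≉ t`. -/
def Lit.ms (L : Lit F ar) : Multiset (Trm F ar) :=
  if L.pos then {L.lhs, L.rhs} else {L.lhs, L.lhs, L.rhs, L.rhs}

/-- The induced ordering on literals. -/
def litGT (O : SimpOrd F ar) (L M : Lit F ar) : Prop := MultGT O.gt L.ms M.ms

/-- The induced ordering on clauses. -/
def clauseGT (O : SimpOrd F ar) (C D : Clause F ar) : Prop := MultGT (litGT O) C D

def clauseGE (O : SimpOrd F ar) (C D : Clause F ar) : Prop := clauseGT O C D ∨ C = D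

/-- A ground clause `D` is redundant w.r.t. a set `S` of ground clauses if it is
entailed by finitely many clauses of `S` that are all smaller than `D`. -/
def Redundant (O : SimpOrd F ar) (S : Set (Clause F ar)) (D : Clause F ar) : Prop :=
  ∃ Cs : List (Clause F ar), (∀ C ∈ Cs, C ∈ S) ∧
    Entails {C | C ∈ Cs} D ∧ ∀ C ∈ Cs, clauseGT O D C

/-! ### Redundancy formulas and partial clauses -/

/-- Redundancy formulas: first-order formulas over the term algebra extended with
the interpreted predicates `≻` (the simplification order) and equality. -/
inductive RForm (F : Type) (ar : F → ℕ) : Type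
  | falsum : RForm F ar
  | verum : RForm F ar
  | eq (s t : Trm F ar) : RForm F ar
  | gt (s t : Trm F ar) : RForm F ar
  | and (a b : RForm F ar) : RForm F ar
  | or (a b : RForm F ar) : RForm F ar
  | ex (x : ℕ) (a : RForm F ar) : RForm F ar

def RForm.subst (σ : Subst F ar) : RForm F ar → RForm F ar
  | .falsum => .falsum
  | .verum => .verum
  | .eq s t => .eq (Trm.subst σ s) (Trm.subst σ t)
  | .gt s t => .gt (Trm.subst σ s) (Trm.subst σ t)
  | .and a b => .and (a.subst σ) (b.subst σ)
  | .or a b => .or (a.subst σ) (b.subst σ)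
  | .ex x a => .ex x (a.subst fun y => if y = x then Trm.var x else σ y)

def RForm.fvars : RForm F ar → Set ℕ
  | .falsum => ∅
  | .verum => ∅
  | .eq s t => s.fvars ∪ t.fvars
  | .gt s t => s.fvars ∪ t.fvars
  | .and a b => a.fvars ∪ b.fvars
  | .or a b => a.fvars ∪ b.fvars
  | .ex x a => a.fvars \ {x}

/-- Truth of a redundancy formula in the extended term algebra `T_R(Σ)`,
under a valuation `v` mapping variables to (ground) terms. -/
def RForm.realize (O : SimpOrd F ar) (v : Subst F ar) : RForm F ar → Prop
  | .falsum => False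
  | .verum => True
  | .eq s t => Trm.subst v s = Trm.subst v t
  | .gt s t => O.gt (Trm.subst v s) (Trm.subst v t)
  | .and a b => a.realize O v ∧ b.realize O v
  | .or a b => a.realize O v ∨ b.realize O v
  | .ex x a => ∃ g : Trm F ar, g.IsGround ∧ a.realize O (Function.update v x g)

/-- `σ ⊨ R`: every ground instance of `Rσ` is true in `T_R(Σ)`. -/
def RSat (O : SimpOrd F ar) (σ : Subst F ar) (R : RForm F ar) : Prop :=
  ∀ v : Subst F ar, (∀ x, (v x).IsGround) → RForm.realize O v (RForm.subst σ R)

theorem RForm.falsum_fvars_sub (s : Set ℕ) : RForm.fvars (.falsum : RForm F ar) ⊆ s := by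
  intro x hx; simp [RForm.fvars] at hx

/-- `s ⪰ t` as a redundancy formula. -/
def RForm.ge (s t : Trm F ar) : RForm F ar := .or (.gt s t) (.eq s t)

/-- `(s ≐ t) ⪰ l` as a redundancy formula. -/
def Lit.geForm (L : Lit F ar) (l : Trm F ar) : RForm F ar :=
  .or (RForm.ge L.lhs l) (RForm.ge L.rhs l)

/-- `(s ≐ t) ≻ l` as a redundancy formula. -/
def Lit.gtForm (L : Lit F ar) (l : Trm F ar) : RForm F ar :=
  .or (.gt L.lhs l) (.gt L.rhs l)

/-- `C ⪰ l` as a redundancy formula (disjunction over the literals of `C`). -/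
noncomputable def Clause.geForm (C : Clause F ar) (l : Trm F ar) : RForm F ar :=
  C.toList.foldr (fun L acc => RForm.or (Lit.geForm L l) acc) RForm.falsum

/-- `C ≻ l` as a redundancy formula (disjunction over the literals of `C`). -/
noncomputable def Clause.gtForm (C : Clause F ar) (l : Trm F ar) : RForm F ar :=
  C.toList.foldr (fun L acc => RForm.or (Lit.gtForm L l) acc) RForm.falsum

/-- A partial clause `C ⋈ R`: a clause together with a redundancy formula all of
whose free variables occur in the clause. -/
structure PClause (F : Type) (ar : F → ℕ) : Type where
  cl : Clause F ar
  rf : RForm F ar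
  hfv : RForm.fvars rf ⊆ Clause.fvars cl

/-- `⌊C ⋈ R⌋`: the ground instances `Cθ` with `θ ⊭ R`. -/
def pgnd (O : SimpOrd F ar) (pc : PClause F ar) : Set (Clause F ar) :=
  {D | ∃ θ : Subst F ar, D = Clause.subst θ pc.cl ∧ Clause.IsGround D ∧ ¬ RSat O θ pc.rf}

/-- `⌊S⌋` for a set of partial clauses. -/
def gndS (O : SimpOrd F ar) (S : Set (PClause F ar)) : Set (Clause F ar) :=
  ⋃ pc ∈ S, pgnd O pc

/-- `S*`: all ground instances of clauses occurring in `S`. -/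
def gstar (S : Set (PClause F ar)) : Set (Clause F ar) :=
  {D | ∃ pc ∈ S, ∃ θ : Subst F ar, D = Clause.subst θ pc.cl ∧ Clause.IsGround D}

/-! ### The PaRC calculus -/

def IsUnifier (σ : Subst F ar) (s t : Trm F ar) : Prop := Trm.subst σ s = Trm.subst σ t

def IsMGU (σ : Subst F ar) (s t : Trm F ar) : Prop :=
  IsUnifier σ s t ∧ ∀ η : Subst F ar, IsUnifier η s t → ∃ μ : Subst F ar, η = Subst.comp σ μ

/-- A literal selection function satisfying the standard condition w.r.t. `≻`. -/
structure SelFun (F : Type) (ar : F → ℕ) (O : SimpOrd F ar) : Type where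
  sel : Clause F ar → Set (Lit F ar)
  subset : ∀ C : Clause F ar, sel C ⊆ {L | L ∈ C}
  nonemptyOn : ∀ C : Clause F ar, C ≠ 0 → (sel C).Nonempty
  standard : ∀ C : Clause F ar,
    (∃ L ∈ sel C, L.pos = false) ∨ ∀ L ∈ sel C, ∀ M ∈ C, ¬ litGT O M L

/-- The inference rules of the PaRC calculus on partial clauses.
`Inf O sel prems σ concl` means: there is a PaRC inference with premises `prems`,
most general unifier `σ`, and conclusion `concl`; selected literals are the displayed
first literals of the premises. -/
inductive Inf (O : SimpOrd F ar) (sel : SelFun F ar O) :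
    List (PClause F ar) → Subst F ar → Clause F ar → Prop
  | sup {l r : Trm F ar} {C₁ : Clause F ar} {R₁ : RForm F ar}
      {h₁ : RForm.fvars R₁ ⊆ Clause.fvars (Lit.mk true l r ::ₘ C₁)}
      {b : Bool} {s t : Trm F ar} {C₂ : Clause F ar} {R₂ : RForm F ar}
      {h₂ : RForm.fvars R₂ ⊆ Clause.fvars (Lit.mk b s t ::ₘ C₂)}
      {p : List ℕ} {l' : Trm F ar} {σ : Subst F ar} :
      Trm.atPos s p = some l' →
      (∀ x, l' ≠ .var x) →
      IsMGU σ l l' →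
      Lit.mk true l r ∈ sel.sel (Lit.mk true l r ::ₘ C₁) →
      Lit.mk b s t ∈ sel.sel (Lit.mk b s t ::ₘ C₂) →
      ¬ RSat O σ (RForm.ge r l) →
      ¬ RSat O σ (RForm.ge t s) →
      ¬ RSat O σ (Clause.geForm C₁ l) →
      (b = true → ¬ RSat O σ (Clause.geForm C₂ s)) →
      ¬ RSat O σ R₁ →
      ¬ RSat O σ R₂ →
      Inf O sel [⟨Lit.mk true l r ::ₘ C₁, R₁, h₁⟩, ⟨Lit.mk b s t ::ₘ C₂, R₂, h₂⟩] σ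
        (Clause.subst σ (Lit.mk b (Trm.replace s p r) t ::ₘ (C₁ + C₂)))
  | eqres {s t : Trm F ar} {C : Clause F ar} {R : RForm F ar}
      {h : RForm.fvars R ⊆ Clause.fvars (Lit.mk false s t ::ₘ C)} {σ : Subst F ar} :
      IsMGU σ s t →
      Lit.mk false s t ∈ sel.sel (Lit.mk false s t ::ₘ C) →
      ¬ RSat O σ R →
      Inf O sel [⟨Lit.mk false s t ::ₘ C, R, h⟩] σ (Clause.subst σ C)
  | eqfac {s t s' t' : Trm F ar} {C : Clause F ar} {R : RForm F ar}
      {h : RForm.fvars R ⊆ Clause.fvars (Lit.mk true s t ::ₘ Lit.mk true s' t' ::ₘ C)}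
      {σ : Subst F ar} :
      IsMGU σ s s' →
      Lit.mk true s t ∈ sel.sel (Lit.mk true s t ::ₘ Lit.mk true s' t' ::ₘ C) →
      Lit.mk true s' t' ∈ sel.sel (Lit.mk true s t ::ₘ Lit.mk true s' t' ::ₘ C) →
      ¬ RSat O σ (RForm.ge t s) →
      ¬ RSat O σ (RForm.gt t' t) →
      ¬ RSat O σ (Clause.gtForm C s) →
      ¬ RSat O σ R →
      Inf O sel [⟨Lit.mk true s t ::ₘ Lit.mk true s' t' ::ₘ C, R, h⟩] σ
        (Clause.subst σ (Lit.mk true s t ::ₘ Lit.mk false t t' ::ₘ C))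

/-! ### Saturation -/

/-- A saturation w.r.t. the PaRC calculus: `S 0` consists of partial clauses of the
form `C ⋈ ⊥`, and each step is either an inference step or a redundancy step. -/
structure Saturation (O : SimpOrd F ar) (sel : SelFun F ar O) : Type where
  S : ℕ → Set (PClause F ar)
  init : ∀ pc ∈ S 0, pc.rf = RForm.falsum
  step : ∀ i : ℕ,
    (∃ (prems : List (PClause F ar)) (σ : Subst F ar) (concl : Clause F ar),
        (∀ pc ∈ prems, pc ∈ S i) ∧ Inf O sel prems σ concl ∧
        S (i + 1) = S i ∪ {⟨concl, RForm.falsum, RForm.falsum_fvars_sub _⟩}) ∨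
    (∃ pc ∈ S i, ∃ (R₂ : RForm F ar)
        (h : RForm.fvars (RForm.or pc.rf R₂) ⊆ Clause.fvars pc.cl),
        (∀ θ : Subst F ar, GroundingFor θ pc.cl → RSat O θ R₂ →
          Redundant O (gstar (S i)) (Clause.subst θ pc.cl)) ∧
        S (i + 1) = (S i \ {pc}) ∪ {⟨pc.cl, RForm.or pc.rf R₂, h⟩})

variable {O : SimpOrd F ar} {sel : SelFun F ar O}

/-- `S_ω = ⋃ i, S i`. -/
def Saturation.Somega (𝕊 : Saturation O sel) : Set (PClause F ar) := ⋃ i, 𝕊.S i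

/-- The limit `⋃_{i≥0} ⋂_{j≥i} ⌊S_j⌋` of a saturation. -/
def Saturation.limit (𝕊 : Saturation O sel) : Set (Clause F ar) :=
  ⋃ i : ℕ, ⋂ j : ℕ, ⋂ (_ : j ≥ i), gndS O (𝕊.S j)

/-- A ground clause is persistent if it belongs to the limit. -/
def Saturation.Persistent (𝕊 : Saturation O sel) (C : Clause F ar) : Prop := C ∈ 𝕊.limit

/-- Fairness of a saturation. -/
def Saturation.Fair (𝕊 : Saturation O sel) : Prop :=
  ∀ (prems : List (PClause F ar)) (σ : Subst F ar) (concl : Clause F ar) (ρ : Subst F ar),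
    Inf O sel prems σ concl →
    (∀ pc ∈ prems, 𝕊.Persistent (Clause.subst ρ (Clause.subst σ pc.cl))) →
    ∃ i : ℕ, (⟨concl, RForm.falsum, RForm.falsum_fvars_sub _⟩ : PClause F ar) ∈ 𝕊.S i

/-! ### Ground rewrite systems and the model construction -/

/-- One-step ground rewriting with a set of (ground) rewrite rules. -/
def Rw (I : Set (Trm F ar × Trm F ar)) (s t : Trm F ar) : Prop :=
  ∃ lr ∈ I, ∃ p : List ℕ, Trm.atPos s p = some lr.1 ∧ t = Trm.replace s p lr.2

def RwStar (I : Set (Trm F ar × Trm F ar)) : Trm F ar → Trm F ar → Prop :=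
  Relation.ReflTransGen (Rw I)

/-- A term is irreducible (a normal form) in `I`. -/
def NormalForm (I : Set (Trm F ar × Trm F ar)) (t : Trm F ar) : Prop := ∀ u, ¬ Rw I t u

/-- `s` and `t` have the same normal form in `I`. -/
def SameNF (I : Set (Trm F ar × Trm F ar)) (s t : Trm F ar) : Prop :=
  ∃ u : Trm F ar, RwStar I s u ∧ RwStar I t u ∧ NormalForm I u

/-- Truth of a ground clause in the interpretation given by a rewrite system. -/
def TrueIn (I : Set (Trm F ar × Trm F ar)) (C : Clause F ar) : Prop :=
  ∃ L ∈ C, if L.pos then SameNF I L.lhs L.rhs else ¬ SameNF I L.lhs L.rhs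

def NonOverlapping (I : Set (Trm F ar × Trm F ar)) : Prop :=
  ∀ lr ∈ I, ∀ lr' ∈ I, lr ≠ lr' → ∀ p : List ℕ, Trm.atPos (Prod.fst lr) p ≠ some (Prod.fst lr')

def Terminating (I : Set (Trm F ar × Trm F ar)) : Prop :=
  WellFounded (fun s t : Trm F ar => Rw I t s)

def Confluent (I : Set (Trm F ar × Trm F ar)) : Prop :=
  ∀ a b c : Trm F ar, RwStar I a b → RwStar I a c → ∃ d, RwStar I b d ∧ RwStar I c d

/-- The productivity condition of the model construction: there is a partial clause
`(l₁ ≈ r₁ ∨ C ⋈ R) ∈ S_ω` (with `l₁ ≈ r₁` selected) and a grounding substitution `θ`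
with `l₁θ = l`, `l₁θ ≻ r₁θ`, `l₁θ ≻ Cθ`, `θ ⊭ R`, `I_{≺l} ⊭ Cθ`, producing the rule
`l → rr` where `rr = r₁θ`. -/
def ProducesWith (O : SimpOrd F ar) (sel : SelFun F ar O) (Sω : Set (PClause F ar))
    (Ipre : Set (Trm F ar × Trm F ar)) (l rr : Trm F ar) : Prop :=
  ∃ (l₁ r₁ : Trm F ar) (C : Clause F ar) (R : RForm F ar)
    (h : RForm.fvars R ⊆ Clause.fvars (Lit.mk true l₁ r₁ ::ₘ C)) (θ : Subst F ar),
    (⟨Lit.mk true l₁ r₁ ::ₘ C, R, h⟩ : PClause F ar) ∈ Sω ∧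
    Lit.mk true l₁ r₁ ∈ sel.sel (Lit.mk true l₁ r₁ ::ₘ C) ∧
    GroundingFor θ (Lit.mk true l₁ r₁ ::ₘ C) ∧
    Trm.subst θ l₁ = l ∧
    O.gt (Trm.subst θ l₁) (Trm.subst θ r₁) ∧
    (∀ L ∈ Clause.subst θ C, O.gt (Trm.subst θ l₁) L.lhs ∧ O.gt (Trm.subst θ l₁) L.rhs) ∧
    ¬ RSat O θ R ∧
    ¬ TrueIn Ipre (Clause.subst θ C) ∧
    rr = Trm.subst θ r₁

/-- The rewrite system `I_l` of the model construction, defined by well-founded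
recursion on `≻`. -/
noncomputable def Interp (O : SimpOrd F ar) (sel : SelFun F ar O)
    (Sω : Set (PClause F ar)) : Trm F ar → Set (Trm F ar × Trm F ar) :=
  WellFounded.fix (C := fun _ => Set (Trm F ar × Trm F ar)) O.wf
    (fun l Irec =>
      let Ipre : Set (Trm F ar × Trm F ar) := ⋃ (r : Trm F ar), ⋃ (h : O.gt l r), Irec r h
      letI := Classical.propDecidable
      if h : NormalForm Ipre l ∧ ∃ rr, ProducesWith O sel Sω Ipre l rr then
        Ipre ∪ {(l, h.2.choose)}
      else Ipre)

/-- The rewrite system `I_{≺l}` of the model construction. -/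
noncomputable def IPre (O : SimpOrd F ar) (sel : SelFun F ar O)
    (Sω : Set (PClause F ar)) (l : Trm F ar) : Set (Trm F ar × Trm F ar) :=
  ⋃ (r : Trm F ar), ⋃ (_ : O.gt l r), Interp O sel Sω r

/-- The rewrite system `I_ω = ⋃_l I_l` of the model construction. -/
noncomputable def IOmega (O : SimpOrd F ar) (sel : SelFun F ar O)
    (Sω : Set (PClause F ar)) : Set (Trm F ar × Trm F ar) :=
  ⋃ (l : Trm F ar), Interp O sel Sω l

/-! ### Auxiliary lemmas for redundancy persistence -/

theorem Trm.not_isGround_var (x : ℕ) : ¬ (Trm.var (F := F) (ar := ar) x).IsGround := by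
  simp [Trm.IsGround]

theorem Trm.notMem_fvars {t : Trm F ar} (h : t.IsGround) (x : ℕ) : x ∉ t.fvars := by
  induction t with
  | var y => exact absurd h (Trm.not_isGround_var y)
  | app f a ih =>
    simp only [Trm.fvars, Set.mem_iUnion]
    rintro ⟨i, hi⟩
    exact ih i (h i) hi

theorem Trm.isGround_subst_iff {t : Trm F ar} {σ : Subst F ar} :
    (t.subst σ).IsGround ↔ ∀ x ∈ t.fvars, (σ x).IsGround := by
  induction t with
  | var x => simp [Trm.subst, Trm.fvars]
  | app f a ih =>
    simp only [Trm.subst, Trm.IsGround, Trm.fvars, Set.mem_iUnion]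
    constructor
    · rintro h x ⟨i, hx⟩
      exact (ih i).1 (h i) x hx
    · intro h i
      exact (ih i).2 fun x hx => h x ⟨i, hx⟩

theorem Trm.subst_congr {t : Trm F ar} {σ τ : Subst F ar}
    (h : ∀ x ∈ t.fvars, σ x = τ x) : t.subst σ = t.subst τ := by
  induction t with
  | var x => exact h x (by simp [Trm.fvars])
  | app f a ih =>
    simp only [Trm.subst]
    congr 1
    funext i
    exact ih i fun x hx => h x (Set.mem_iUnion.2 ⟨i, hx⟩)

theorem Trm.fvars_subst_subset (t : Trm F ar) (σ : Subst F ar) :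
    (t.subst σ).fvars ⊆ ⋃ x ∈ t.fvars, (σ x).fvars := by
  induction t with
  | var x => simp [Trm.subst, Trm.fvars]
  | app f a ih =>
    intro y hy
    simp only [Trm.subst, Trm.fvars, Set.mem_iUnion] at hy
    obtain ⟨i, hi⟩ := hy
    obtain ⟨x, hx, hyx⟩ := Set.mem_iUnion₂.1 (ih i hi)
    exact Set.mem_iUnion₂.2 ⟨x, Set.mem_iUnion.2 ⟨i, hx⟩, hyx⟩

theorem RForm.realize_congr {R : RForm F ar} : ∀ {v w : Subst F ar},
    (∀ x ∈ R.fvars, v x = w x) → (RForm.realize O v R ↔ RForm.realize O w R) := by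
  induction R with
  | falsum => intro v w _; simp [RForm.realize]
  | verum => intro v w _; simp [RForm.realize]
  | eq s t =>
    intro v w h
    simp only [RForm.realize, RForm.fvars] at *
    rw [Trm.subst_congr (fun x hx => h x (Set.mem_union_left _ hx)),
      Trm.subst_congr (fun x hx => h x (Set.mem_union_right _ hx))]
  | gt s t =>
    intro v w h
    simp only [RForm.realize, RForm.fvars] at *
    rw [Trm.subst_congr (fun x hx => h x (Set.mem_union_left _ hx)),
      Trm.subst_congr (fun x hx => h x (Set.mem_union_right _ hx))]
  | and a b iha ihb =>
    intro v w h
    simp only [RForm.realize]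
    exact and_congr (iha fun x hx => h x (Set.mem_union_left _ hx))
      (ihb fun x hx => h x (Set.mem_union_right _ hx))
  | or a b iha ihb =>
    intro v w h
    simp only [RForm.realize]
    exact or_congr (iha fun x hx => h x (Set.mem_union_left _ hx))
      (ihb fun x hx => h x (Set.mem_union_right _ hx))
  | ex x a iha =>
    intro v w h
    simp only [RForm.realize]
    refine exists_congr fun g => and_congr_right fun _ => iha ?_
    intro y hy
    rcases eq_or_ne y x with rfl | hne
    · simp
    · rw [Function.update_of_ne hne, Function.update_of_ne hne]
      exact h y ⟨hy, by simp [hne]⟩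

theorem RForm.fvars_subst_subset : ∀ (R : RForm F ar) (σ : Subst F ar),
    (RForm.subst σ R).fvars ⊆ ⋃ x ∈ R.fvars, (σ x).fvars := by
  intro R
  induction R with
  | falsum => intro σ; simp [RForm.subst, RForm.fvars]
  | verum => intro σ; simp [RForm.subst, RForm.fvars]
  | eq s t =>
    intro σ z hz
    simp only [RForm.subst, RForm.fvars, Set.mem_union] at hz
    rcases hz with hz | hz
    · obtain ⟨x, hx, hzx⟩ := Set.mem_iUnion₂.1 (Trm.fvars_subst_subset s σ hz)
      exact Set.mem_iUnion₂.2 ⟨x, Set.mem_union_left _ hx, hzx⟩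
    · obtain ⟨x, hx, hzx⟩ := Set.mem_iUnion₂.1 (Trm.fvars_subst_subset t σ hz)
      exact Set.mem_iUnion₂.2 ⟨x, Set.mem_union_right _ hx, hzx⟩
  | gt s t =>
    intro σ z hz
    simp only [RForm.subst, RForm.fvars, Set.mem_union] at hz
    rcases hz with hz | hz
    · obtain ⟨x, hx, hzx⟩ := Set.mem_iUnion₂.1 (Trm.fvars_subst_subset s σ hz)
      exact Set.mem_iUnion₂.2 ⟨x, Set.mem_union_left _ hx, hzx⟩
    · obtain ⟨x, hx, hzx⟩ := Set.mem_iUnion₂.1 (Trm.fvars_subst_subset t σ hz)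
      exact Set.mem_iUnion₂.2 ⟨x, Set.mem_union_right _ hx, hzx⟩
  | and a b iha ihb =>
    intro σ z hz
    simp only [RForm.subst, RForm.fvars, Set.mem_union] at hz
    rcases hz with hz | hz
    · obtain ⟨x, hx, hzx⟩ := Set.mem_iUnion₂.1 (iha σ hz)
      exact Set.mem_iUnion₂.2 ⟨x, Set.mem_union_left _ hx, hzx⟩
    · obtain ⟨x, hx, hzx⟩ := Set.mem_iUnion₂.1 (ihb σ hz)
      exact Set.mem_iUnion₂.2 ⟨x, Set.mem_union_right _ hx, hzx⟩
  | or a b iha ihb =>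
    intro σ z hz
    simp only [RForm.subst, RForm.fvars, Set.mem_union] at hz
    rcases hz with hz | hz
    · obtain ⟨x, hx, hzx⟩ := Set.mem_iUnion₂.1 (iha σ hz)
      exact Set.mem_iUnion₂.2 ⟨x, Set.mem_union_left _ hx, hzx⟩
    · obtain ⟨x, hx, hzx⟩ := Set.mem_iUnion₂.1 (ihb σ hz)
      exact Set.mem_iUnion₂.2 ⟨x, Set.mem_union_right _ hx, hzx⟩
  | ex x a iha =>
    intro σ z hz
    simp only [RForm.subst, RForm.fvars, Set.mem_diff, Set.mem_singleton_iff] at hz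
    obtain ⟨hz1, hz2⟩ := hz
    obtain ⟨y, hy, hzy⟩ := Set.mem_iUnion₂.1 (iha _ hz1)
    rcases eq_or_ne y x with rfl | hne
    · simp only [if_pos rfl, Trm.fvars, Set.mem_singleton_iff] at hzy
      exact absurd hzy hz2
    · refine Set.mem_iUnion₂.2 ⟨y, ?_, ?_⟩
      · simp only [RForm.fvars, Set.mem_diff, Set.mem_singleton_iff]
        exact ⟨hy, hne⟩
      · simpa only [if_neg hne] using hzy

theorem exists_ground_trm (hconst : ∃ c : F, ar c = 0) :
    ∃ t : Trm F ar, t.IsGround := by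
  obtain ⟨c, hc⟩ := hconst
  refine ⟨.app c (fun i => Fin.elim0 (Fin.cast hc i)), ?_⟩
  intro i
  exact Fin.elim0 (Fin.cast hc i)

theorem realize_subst_indep {R : RForm F ar} {σ : Subst F ar}
    (hg : ∀ x ∈ R.fvars, (σ x).IsGround) (v w : Subst F ar) :
    RForm.realize O v (RForm.subst σ R) ↔ RForm.realize O w (RForm.subst σ R) :=
  RForm.realize_congr (fun x hx => by
    exfalso
    obtain ⟨y, hy, hxy⟩ := Set.mem_iUnion₂.1 (RForm.fvars_subst_subset R σ hx)
    exact Trm.notMem_fvars (hg y hy) x hxy)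

theorem not_RSat_falsum (hconst : ∃ c : F, ar c = 0) (σ : Subst F ar) :
    ¬ RSat O σ (RForm.falsum : RForm F ar) := by
  intro h
  obtain ⟨t0, ht0⟩ := exists_ground_trm hconst
  have := h (fun _ => t0) (fun _ => ht0)
  simpa [RForm.subst, RForm.realize] using this

theorem RSat_or (hconst : ∃ c : F, ar c = 0) {σ : Subst F ar} {a b : RForm F ar}
    (hga : ∀ x ∈ a.fvars, (σ x).IsGround) (hgb : ∀ x ∈ b.fvars, (σ x).IsGround)
    (h : RSat O σ (RForm.or a b)) : RSat O σ a ∨ RSat O σ b := by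
  obtain ⟨t0, ht0⟩ := exists_ground_trm (ar := ar) hconst
  have h0 := h (fun _ => t0) (fun _ => ht0)
  simp only [RForm.subst, RForm.realize] at h0
  rcases h0 with h0 | h0
  · exact Or.inl fun v hv => (realize_subst_indep hga v _).2 h0
  · exact Or.inr fun v hv => (realize_subst_indep hgb v _).2 h0

theorem grounding_fvars {θ : Subst F ar} {C : Clause F ar} (h : GroundingFor θ C) :
    ∀ x ∈ C.fvars, (θ x).IsGround := by
  rintro x ⟨L, hL, hx⟩
  have hg := h (L.subst θ) (Multiset.mem_map_of_mem _ hL)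
  rcases hx with hx | hx
  · exact Trm.isGround_subst_iff.1 hg.1 x hx
  · exact Trm.isGround_subst_iff.1 hg.2 x hx

/-! ### Transitivity and well-foundedness of the bag extension -/

theorem multGT_trans {α : Type} {r : α → α → Prop}
    (hr : ∀ {a b c : α}, r a b → r b c → r a c)
    {N M P : Multiset α} (h1 : MultGT r N M) (h2 : MultGT r M P) : MultGT r N P := by
  classical
  obtain ⟨X₁, Y₁, Z₁, hX₁, hN, hM₁, hc₁⟩ := h1
  obtain ⟨X₂, Y₂, Z₂, hX₂, hM₂, hP, hc₂⟩ := h2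
  have cN : ∀ a, N.count a = Z₁.count a + X₁.count a := fun a => by
    rw [hN, Multiset.count_add]
  have cM₁ : ∀ a, M.count a = Z₁.count a + Y₁.count a := fun a => by
    rw [hM₁, Multiset.count_add]
  have cM₂ : ∀ a, M.count a = Z₂.count a + X₂.count a := fun a => by
    rw [hM₂, Multiset.count_add]
  have cP : ∀ a, P.count a = Z₂.count a + Y₂.count a := fun a => by
    rw [hP, Multiset.count_add]
  have hZc : ∀ a, (Z₁ ∩ Z₂).count a = min (Z₁.count a) (Z₂.count a) := fun a =>
    Multiset.count_inter a Z₁ Z₂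
  have hmem : ∀ (s : Multiset α) (a : α), a ∈ s - Z₁ ∩ Z₂ ↔ (Z₁ ∩ Z₂).count a < s.count a := by
    intro s a
    rw [← Multiset.count_pos, Multiset.count_sub]
    omega
  have hxX₁ : ∀ x ∈ X₁, x ∈ N - Z₁ ∩ Z₂ := by
    intro x hx
    rw [hmem]
    have h1 := Multiset.count_pos.2 hx
    have h2 := cN x
    have h3 := hZc x
    omega
  refine ⟨N - Z₁ ∩ Z₂, P - Z₁ ∩ Z₂, Z₁ ∩ Z₂, ?_, ?_, ?_, ?_⟩
  · obtain ⟨x, hx⟩ := Multiset.exists_mem_of_ne_zero hX₁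
    intro h0
    rw [h0] at hxX₁
    exact Multiset.notMem_zero x (hxX₁ x hx)
  · have : Z₁ ∩ Z₂ ≤ N := by
      rw [Multiset.le_iff_count]
      intro a
      have := hZc a
      have := cN a
      omega
    exact (add_tsub_cancel_of_le this).symm
  · have : Z₁ ∩ Z₂ ≤ P := by
      rw [Multiset.le_iff_count]
      intro a
      have := hZc a
      have := cP a
      omega
    exact (add_tsub_cancel_of_le this).symm
  · intro y hy
    rw [hmem] at hy
    by_cases hca : Z₂.count y ≤ Z₁.count y
    · have hyY₂ : y ∈ Y₂ := by
        rw [← Multiset.count_pos]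
        have := cP y
        have := hZc y
        omega
      obtain ⟨x₂, hx₂, hr₂⟩ := hc₂ y hyY₂
      by_cases hcb : Z₂.count x₂ < Z₁.count x₂
      · refine ⟨x₂, ?_, hr₂⟩
        rw [hmem]
        have h1 := cN x₂
        have h2 := hZc x₂
        have h3 := cM₂ x₂
        omega
      · have hx₂Y₁ : x₂ ∈ Y₁ := by
          rw [← Multiset.count_pos]
          have h1 := Multiset.count_pos.2 hx₂
          have h2 := cM₁ x₂
          have h3 := cM₂ x₂
          omega
        obtain ⟨x₁, hx₁, hr₁⟩ := hc₁ x₂ hx₂Y₁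
        exact ⟨x₁, hxX₁ x₁ hx₁, hr hr₁ hr₂⟩
    · have hyY₁ : y ∈ Y₁ := by
        rw [← Multiset.count_pos]
        have h1 := cM₁ y
        have h2 := cM₂ y
        have h3 := hZc y
        omega
      obtain ⟨x₁, hx₁, hr₁⟩ := hc₁ y hyY₁
      exact ⟨x₁, hxX₁ x₁ hx₁, hr₁⟩

theorem multGT_transGen_cutExpand {α : Type} {r : α → α → Prop} :
    ∀ (X : Multiset α), X ≠ 0 → ∀ (Y Z : Multiset α), (∀ y ∈ Y, ∃ x ∈ X, r x y) →
      Relation.TransGen (Relation.CutExpand (fun a b => r b a)) (Z + Y) (Z + X) := by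
  classical
  intro X
  induction X using Multiset.induction with
  | empty => intro h; exact absurd rfl h
  | cons a X' ih =>
    intro _ Y Z hcov
    by_cases hX' : X' = (0 : Multiset α)
    · subst hX'
      apply Relation.TransGen.single
      refine ⟨Y, a, ?_, ?_⟩
      · intro y hy
        obtain ⟨x, hx, hrx⟩ := hcov y hy
        rcases Multiset.mem_cons.1 hx with rfl | hx
        · exact hrx
        · exact absurd hx (Multiset.notMem_zero x)
      · show Z + Y + {a} = Z + (a ::ₘ 0) + Y
        have : (a ::ₘ (0 : Multiset α)) = {a} := rfl
        rw [this, add_right_comm]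
    · have hsplit := Multiset.filter_add_not (fun y => ∃ x ∈ X', r x y) Y
      have h1 := ih hX' (Y.filter (fun y => ∃ x ∈ X', r x y)) (Z + {a})
        (fun y hy => (Multiset.mem_filter.1 hy).2)
      have h0 : Relation.CutExpand (fun a b => r b a) (Z + Y)
          ((Z + {a}) + Y.filter (fun y => ∃ x ∈ X', r x y)) := by
        refine ⟨Y.filter (fun y => ¬ ∃ x ∈ X', r x y), a, ?_, ?_⟩
        · intro y hy
          have hy' := Multiset.mem_filter.1 hy
          obtain ⟨x, hx, hrx⟩ := hcov y hy'.1
          rcases Multiset.mem_cons.1 hx with rfl | hx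
          · exact hrx
          · exact absurd ⟨x, hx, hrx⟩ hy'.2
        · conv_lhs => rw [← hsplit]
          rw [show Y.filter (fun y => ¬ ∃ x ∈ X', r x y) =
            Y.filter (fun y => ¬ (fun y => ∃ x ∈ X', r x y) y) from rfl]
          abel
      have h2 := h1.head h0
      rw [show Z + (a ::ₘ X') = Z + {a} + X' from by
        rw [add_assoc, Multiset.singleton_add]]
      exact h2

theorem multGT_wf {α : Type} {r : α → α → Prop} (h : WellFounded (fun a b => r b a)) :
    WellFounded (fun M N : Multiset α => MultGT r N M) :=
  Subrelation.wf
    (fun {M N} hMN => by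
      obtain ⟨X, Y, Z, hX, hN, hM, hc⟩ := hMN
      exact hN ▸ hM ▸ multGT_transGen_cutExpand X hX Y Z hc)
    h.cutExpand.transGen

theorem litGT_wf (O : SimpOrd F ar) : WellFounded (fun L M : Lit F ar => litGT O M L) :=
  InvImage.wf Lit.ms (multGT_wf O.wf)

theorem clauseGT_wf (O : SimpOrd F ar) :
    WellFounded (fun C D : Clause F ar => clauseGT O D C) :=
  multGT_wf (litGT_wf O)

theorem litGT_trans {L M P : Lit F ar} (h1 : litGT O L M) (h2 : litGT O M P) :
    litGT O L P :=
  multGT_trans (r := O.gt) (fun ha hb => O.trans ha hb) h1 h2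

theorem clauseGT_trans {C D E : Clause F ar} (h1 : clauseGT O C D) (h2 : clauseGT O D E) :
    clauseGT O C E :=
  multGT_trans (r := litGT O) (fun ha hb => litGT_trans ha hb) h1 h2

/-! ### Monotonicity of redundancy and the saturation invariant -/

theorem Redundant.mono {S T : Set (Clause F ar)} (hST : S ⊆ T) {D : Clause F ar}
    (h : Redundant O S D) : Redundant O T D := by
  obtain ⟨Cs, h1, h2, h3⟩ := h
  exact ⟨Cs, fun C hC => hST (h1 C hC), h2, h3⟩

theorem gstar_mono_step (𝕊 : Saturation O sel) (j : ℕ) :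
    gstar (𝕊.S j) ⊆ gstar (𝕊.S (j + 1)) := by
  rintro D ⟨pc, hpc, θ, hD, hg⟩
  rcases 𝕊.step j with ⟨prems, σ, concl, _, _, hS⟩ | ⟨pc₀, hpc₀, R₂, h, _, hS⟩
  · refine ⟨pc, ?_, θ, hD, hg⟩
    rw [hS]
    exact Or.inl hpc
  · by_cases hpe : pc = pc₀
    · refine ⟨⟨pc₀.cl, RForm.or pc₀.rf R₂, h⟩, ?_, θ, by rw [hD, hpe], hg⟩
      rw [hS]
      exact Or.inr rfl
    · refine ⟨pc, ?_, θ, hD, hg⟩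
      rw [hS]
      exact Or.inl ⟨hpc, hpe⟩

theorem saturation_invariant (hconst : ∃ c : F, ar c = 0) (𝕊 : Saturation O sel) :
    ∀ j : ℕ, ∀ pc ∈ 𝕊.S j, ∀ θ : Subst F ar, GroundingFor θ pc.cl → RSat O θ pc.rf →
      Redundant O (gstar (𝕊.S j)) (Clause.subst θ pc.cl) := by
  intro j
  induction j with
  | zero =>
    intro pc hpc θ _ hsat
    rw [𝕊.init pc hpc] at hsat
    exact absurd hsat (not_RSat_falsum hconst θ)
  | succ j ih =>
    intro pc hpc θ hgθ hsat
    rcases 𝕊.step j with ⟨prems, σ, concl, hprems, hinf, hS⟩ | ⟨pc₀, hpc₀, R₂, h, hrstep, hS⟩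
    · rw [hS] at hpc
      rcases hpc with hpc | hpc
      · exact (ih pc hpc θ hgθ hsat).mono (gstar_mono_step 𝕊 j)
      · rw [Set.mem_singleton_iff] at hpc
        subst hpc
        exact absurd hsat (not_RSat_falsum hconst θ)
    · rw [hS] at hpc
      rcases hpc with ⟨hpc, _⟩ | hpc
      · exact (ih pc hpc θ hgθ hsat).mono (gstar_mono_step 𝕊 j)
      · rw [Set.mem_singleton_iff] at hpc
        subst hpc
        have hgv := grounding_fvars hgθ
        have hga : ∀ x ∈ pc₀.rf.fvars, (θ x).IsGround :=
          fun x hx => hgv x (pc₀.hfv hx)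
        have hgb : ∀ x ∈ R₂.fvars, (θ x).IsGround := by
          intro x hx
          refine hgv x (h ?_)
          simp only [RForm.fvars, Set.mem_union]
          exact Or.inr hx
        rcases RSat_or hconst hga hgb hsat with h1 | h1
        · exact (ih pc₀ hpc₀ θ hgθ h1).mono (gstar_mono_step 𝕊 j)
        · exact (hrstep θ hgθ h1).mono (gstar_mono_step 𝕊 j)

/-! ### From `S*`-redundancy to `⌊S⌋`-redundancy -/

theorem redundant_combine {S : Set (Clause F ar)} {D : Clause F ar}
    (Cs : List (Clause F ar)) (hent : Entails {C | C ∈ Cs} D)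
    (h : ∀ C ∈ Cs, ∃ Es : List (Clause F ar), (∀ E ∈ Es, E ∈ S) ∧
      Entails {E | E ∈ Es} C ∧ ∀ E ∈ Es, clauseGT O D E) :
    Redundant O S D := by
  choose Es hS hE hG using h
  refine ⟨Cs.attach.flatMap (fun c => Es c.1 c.2), ?_, ?_, ?_⟩
  · intro E hE'
    obtain ⟨c, hc, hEc⟩ := List.mem_flatMap.1 hE'
    exact hS c.1 c.2 E hEc
  · intro A hA
    apply hent A
    intro C hC
    apply hE C hC A
    intro E hEC
    exact hA E (List.mem_flatMap.2 ⟨⟨C, hC⟩, List.mem_attach _ _, hEC⟩)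
  · intro E hE'
    obtain ⟨c, _, hEc⟩ := List.mem_flatMap.1 hE'
    exact hG c.1 c.2 E hEc

theorem redundant_gnd (hconst : ∃ c : F, ar c = 0) (𝕊 : Saturation O sel) (j : ℕ)
    (D : Clause F ar) (hred : Redundant O (gstar (𝕊.S j)) D) :
    Redundant O (gndS O (𝕊.S j)) D := by
  induction D using (clauseGT_wf O).induction with
  | _ D ih => ?_
  obtain ⟨Cs, hmem, hent, hgt⟩ := hred
  refine redundant_combine Cs hent ?_
  intro C hC
  by_cases hCg : C ∈ gndS O (𝕊.S j)
  · refine ⟨[C], ?_, ?_, ?_⟩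
    · intro E hEe
      rw [List.mem_singleton] at hEe
      exact hEe ▸ hCg
    · intro A hA
      exact hA C (by simp)
    · intro E hEe
      rw [List.mem_singleton] at hEe
      exact hEe ▸ hgt C hC
  · obtain ⟨pc, hpc, θ, hCeq, hCgr⟩ := hmem C hC
    have hsat : RSat O θ pc.rf := by
      by_contra hns
      exact hCg (Set.mem_biUnion hpc ⟨θ, hCeq, hCgr, hns⟩)
    have hgrd : GroundingFor θ pc.cl := by
      rw [hCeq] at hCgr
      exact hCgr
    have hCred : Redundant O (gstar (𝕊.S j)) C :=
      hCeq ▸ saturation_invariant hconst 𝕊 j pc hpc θ hgrd hsat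
    obtain ⟨Es, hS', hE', hG'⟩ := ih C (hgt C hC) hCred
    exact ⟨Es, hS', hE', fun E hEe => clauseGT_trans (hgt C hC) (hG' E hEe)⟩

/-- Redundancy persists: if a ground clause is redundant w.r.t.
`S i *`, then for all `j ≥ i` it is redundant w.r.t. `S j *` and w.r.t. `⌊S j⌋`. -/
theorem redundancy_persists {F : Type} {ar : F → ℕ} (hF : Finite F) (hconst : ∃ c : F, ar c = 0)
    (O : SimpOrd F ar) (sel : SelFun F ar O) (𝕊 : Saturation O sel)
    (C : Clause F ar) (hC : Clause.IsGround C) (i : ℕ)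
    (hred : Redundant O (gstar (𝕊.S i)) C) :
    ∀ j ≥ i, Redundant O (gstar (𝕊.S j)) C ∧ Redundant O (gndS O (𝕊.S j)) C := by
  intro j hj
  have key : ∀ k, i ≤ k → Redundant O (gstar (𝕊.S k)) C := by
    intro k hk
    induction k, hk using Nat.le_induction with
    | base => exact hred
    | succ k hk ihk => exact ihk.mono (gstar_mono_step 𝕊 k)
  exact ⟨key j hj, redundant_gnd hconst 𝕊 j C (key j hj)⟩


end PaRC
end

section
/- Let s ≻ t be ground terms and C a ground clause such that every term r occurring in C satisfies t ⪰ r. Then, for the rewrite systems I_s and I_t of the model construction, I_s ⊨ C if and only if I_t ⊨ C. -/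
set_option autoImplicit false

namespace PaRC

variable {F : Type} {ar : F → ℕ}

variable {O : SimpOrd F ar} {sel : SelFun F ar O}

section Aux

variable {O : SimpOrd F ar} {sel : SelFun F ar O}

lemma atPos_nil (u : Trm F ar) : Trm.atPos u [] = some u := by cases u <;> rfl

lemma replace_atPos : ∀ (u : Trm F ar) (p : List ℕ) {a : Trm F ar},
    Trm.atPos u p = some a → Trm.replace u p a = u
  | _, [], _, h => by
      rw [atPos_nil, Option.some_inj] at h
      simp [Trm.replace, h]
  | .var _, _ :: _, _, h => by simp [Trm.atPos] at h
  | .app f b, i :: p, a, h => by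
      simp only [Trm.atPos] at h
      split at h
      · next hi =>
          simp only [Trm.replace, dif_pos hi]
          rw [replace_atPos _ _ h, Function.update_eq_self]
      · exact absurd h (by simp)

lemma ge_of_atPos {u a : Trm F ar} {p : List ℕ} (h : Trm.atPos u p = some a) :
    O.gt u a ∨ u = a := by
  by_cases he : u = a
  · exact Or.inr he
  · exact Or.inl (O.subterm p h he)

lemma interp_eq_def (Sω : Set (PClause F ar)) (l : Trm F ar) :
    Interp O sel Sω l =
      (letI := Classical.propDecidable
       if h : NormalForm (IPre O sel Sω l) l ∧
           ∃ rr, ProducesWith O sel Sω (IPre O sel Sω l) l rr then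
         IPre O sel Sω l ∪ {(l, h.2.choose)}
       else IPre O sel Sω l) := by
  conv_lhs => rw [Interp]
  rw [WellFounded.fix_eq]
  rfl

lemma IPre_subset (Sω : Set (PClause F ar)) (l : Trm F ar) :
    IPre O sel Sω l ⊆ Interp O sel Sω l := by
  rw [interp_eq_def]
  split
  · exact Set.subset_union_left
  · exact subset_rfl

lemma interp_mono (Sω : Set (PClause F ar)) {l r : Trm F ar} (h : O.gt l r) :
    Interp O sel Sω r ⊆ Interp O sel Sω l :=
  fun _ hab => IPre_subset Sω l (Set.mem_iUnion.2 ⟨r, Set.mem_iUnion.2 ⟨h, hab⟩⟩)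

lemma interp_cases (Sω : Set (PClause F ar)) (l : Trm F ar) :
    ∀ ab ∈ Interp O sel Sω l, ab ∈ IPre O sel Sω l ∨ (ab.1 = l ∧ O.gt l ab.2) := by
  intro ab hab
  rw [interp_eq_def] at hab
  split at hab
  · next h =>
      rcases hab with hab | hab
      · exact Or.inl hab
      · right
        simp only [Set.mem_singleton_iff] at hab
        subst hab
        refine ⟨rfl, ?_⟩
        obtain ⟨l₁, r₁, Cc, R, hh, θ, _, _, _, hl, hgt, _, _, _, hrr⟩ := h.2.choose_spec
        rw [hrr, ← hl]
        exact hgt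
  · exact Or.inl hab

lemma interp_spec (Sω : Set (PClause F ar)) (l₀ : Trm F ar) :
    ∀ ab ∈ Interp O sel Sω l₀,
      ab ∈ Interp O sel Sω ab.1 ∧ (O.gt l₀ ab.1 ∨ ab.1 = l₀) ∧ O.gt ab.1 ab.2 :=
  O.wf.induction
    (C := fun l => ∀ ab ∈ Interp O sel Sω l,
      ab ∈ Interp O sel Sω ab.1 ∧ (O.gt l ab.1 ∨ ab.1 = l) ∧ O.gt ab.1 ab.2)
    l₀ (by
      intro l ih ab hab
      rcases interp_cases Sω l ab hab with h | h
      · simp only [IPre, Set.mem_iUnion] at h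
        obtain ⟨r, hr, hmem⟩ := h
        obtain ⟨h1, h2, h3⟩ := ih r hr ab hmem
        refine ⟨h1, Or.inl ?_, h3⟩
        rcases h2 with h2 | h2
        · exact O.trans hr h2
        · exact h2 ▸ hr
      · refine ⟨?_, Or.inr h.1, ?_⟩
        · rw [h.1]; exact hab
        · rw [h.1]; exact h.2)

lemma rw_gt (Sω : Set (PClause F ar)) (l : Trm F ar) {u u' : Trm F ar}
    (h : Rw (Interp O sel Sω l) u u') : O.gt u u' := by
  obtain ⟨lr, hlr, p, hp, he⟩ := h
  have hrule := (interp_spec Sω l lr hlr).2.2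
  have := O.ctxStable u p (by rw [hp]; rfl) hrule
  rw [replace_atPos u p hp] at this
  exact he ▸ this

lemma rw_iff (Sω : Set (PClause F ar)) {s t : Trm F ar} (hst : O.gt s t) {u : Trm F ar}
    (hu : O.gt t u ∨ t = u) (u' : Trm F ar) :
    Rw (Interp O sel Sω s) u u' ↔ Rw (Interp O sel Sω t) u u' := by
  constructor
  · rintro ⟨lr, hlr, p, hp, he⟩
    refine ⟨lr, ?_, p, hp, he⟩
    have h1 := (interp_spec Sω s lr hlr).1
    have h2 : O.gt u lr.1 ∨ u = lr.1 := ge_of_atPos hp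
    have ht1 : O.gt t lr.1 ∨ t = lr.1 := by
      rcases hu with hu | hu
      · rcases h2 with h2 | h2
        · exact Or.inl (O.trans hu h2)
        · exact Or.inl (h2 ▸ hu)
      · exact hu ▸ h2
    rcases ht1 with h | h
    · exact interp_mono Sω h h1
    · exact h ▸ h1
  · rintro ⟨lr, hlr, p, hp, he⟩
    exact ⟨lr, interp_mono Sω hst hlr, p, hp, he⟩

lemma rwStar_pres (Sω : Set (PClause F ar)) (l : Trm F ar) {t u v : Trm F ar}
    (hu : O.gt t u ∨ t = u) (h : RwStar (Interp O sel Sω l) u v) :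
    O.gt t v ∨ t = v := by
  induction h with
  | refl => exact hu
  | tail h1 h2 ih =>
      have hg := rw_gt Sω l h2
      rcases ih with h | h
      · exact Or.inl (O.trans h hg)
      · exact Or.inl (h ▸ hg)

lemma rwStar_iff (Sω : Set (PClause F ar)) {s t : Trm F ar} (hst : O.gt s t)
    {u v : Trm F ar} (hu : O.gt t u ∨ t = u) :
    RwStar (Interp O sel Sω s) u v ↔ RwStar (Interp O sel Sω t) u v := by
  constructor
  · intro h
    induction h with
    | refl => exact .refl
    | tail h1 h2 ih =>
        exact ih.tail ((rw_iff Sω hst (rwStar_pres Sω t hu ih) _).1 h2)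
  · intro h
    refine Relation.ReflTransGen.mono (fun a b hab => ?_) u v h
    obtain ⟨lr, hlr, p, hp, he⟩ := hab
    exact ⟨lr, interp_mono Sω hst hlr, p, hp, he⟩

lemma nf_iff (Sω : Set (PClause F ar)) {s t u : Trm F ar} (hst : O.gt s t)
    (hu : O.gt t u ∨ t = u) :
    NormalForm (Interp O sel Sω s) u ↔ NormalForm (Interp O sel Sω t) u := by
  unfold NormalForm
  constructor <;> intro h w hw
  · exact h w ((rw_iff Sω hst hu w).2 hw)
  · exact h w ((rw_iff Sω hst hu w).1 hw)

lemma sameNF_iff (Sω : Set (PClause F ar)) {s t a b : Trm F ar} (hst : O.gt s t)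
    (ha : O.gt t a ∨ t = a) (hb : O.gt t b ∨ t = b) :
    SameNF (Interp O sel Sω s) a b ↔ SameNF (Interp O sel Sω t) a b := by
  constructor
  · rintro ⟨w, h1, h2, h3⟩
    have hw := rwStar_pres Sω s ha h1
    exact ⟨w, (rwStar_iff Sω hst ha).1 h1, (rwStar_iff Sω hst hb).1 h2,
      (nf_iff Sω hst hw).1 h3⟩
  · rintro ⟨w, h1, h2, h3⟩
    have hw := rwStar_pres Sω t ha h1
    exact ⟨w, (rwStar_iff Sω hst ha).2 h1, (rwStar_iff Sω hst hb).2 h2,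
      (nf_iff Sω hst hw).2 h3⟩

end Aux

/-- If `s ≻ t` are ground terms and every term occurring in the
ground clause `C` is `⪯ t`, then `I_s ⊨ C` iff `I_t ⊨ C`. -/
theorem trueIn_Is_iff_It {F : Type} {ar : F → ℕ} (hF : Finite F) (hconst : ∃ c : F, ar c = 0)
    (O : SimpOrd F ar) (sel : SelFun F ar O) (𝕊 : Saturation O sel)
    (s t : Trm F ar) (hs : s.IsGround) (ht : t.IsGround) (hst : O.gt s t)
    (C : Clause F ar) (hC : Clause.IsGround C)
    (hdom : ∀ u : Trm F ar, OccursIn u C → O.gt t u ∨ t = u) :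
    (TrueIn (Interp O sel 𝕊.Somega s) C ↔ TrueIn (Interp O sel 𝕊.Somega t) C) := by
  have hiff : ∀ L ∈ C, (SameNF (Interp O sel 𝕊.Somega s) L.lhs L.rhs ↔
      SameNF (Interp O sel 𝕊.Somega t) L.lhs L.rhs) := by
    intro L hL
    exact sameNF_iff _ hst (hdom L.lhs ⟨L, hL, [], Or.inl (atPos_nil _)⟩)
      (hdom L.rhs ⟨L, hL, [], Or.inr (atPos_nil _)⟩)
  constructor <;> rintro ⟨L, hL, h⟩ <;> refine ⟨L, hL, ?_⟩
  · cases hp : L.pos <;> simp only [hp, Bool.false_eq_true, if_false, if_true] at h ⊢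
    · exact fun hc => h ((hiff L hL).2 hc)
    · exact (hiff L hL).1 h
  · cases hp : L.pos <;> simp only [hp, Bool.false_eq_true, if_false, if_true] at h ⊢
    · exact fun hc => h ((hiff L hL).1 hc)
    · exact (hiff L hL).2 h

end PaRC
end
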